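/- arXiv:gr-qc/0603008 — 4 statements merged into one kernel-verified Lean document; each statement's English description precedes it below -/
import Mathlib

section
/- For all indices a, b, c, d ∈ Fin 2, the Haar integral ∫_{SU(2)} g(a,b) · conj(g(c,d)) dμ(g) of the product of a matrix entry of g with the complex conjugate of a matrix entry of g equals 1/2 if a = c and b = d, and equals 0 otherwise. (This is the orthogonality relation ∫ dg conj(D^j_{ab}(g)) D^k_{cd}(g) = (δ_{jk}/d_j) δ_{ac} δ_{bd} for the matrix coefficients of irreducible representations, specialized to the fundamental spin-1/2 representation, where d_{1/2} = 2.) -/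
open MeasureTheory Matrix

noncomputable section

/-- `SU(2)`: the special unitary group of `2 × 2` complex matrices. -/
abbrev SU2 := Matrix.specialUnitaryGroup (Fin 2) ℂ

/-- The group structure on `SU(2)` (inverse given by the conjugate transpose). -/
instance : Group SU2 :=
  { (inferInstance : Monoid SU2) with
    inv := fun g =>
      ⟨star g.1, Submonoid.mem_inf.2
        ⟨Unitary.star_mem (Submonoid.mem_inf.1 g.2).1, by
          have h : (g.1).det = 1 := (Submonoid.mem_inf.1 g.2).2
          simp [MonoidHom.mem_mker, Matrix.star_eq_conjTranspose, Matrix.det_conjTranspose, h]⟩⟩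
    inv_mul_cancel := fun g => Subtype.ext (Submonoid.mem_inf.1 g.2).1.1 }

/-- The Borel σ-algebra on `SU(2)` (with its subspace topology). -/
instance : MeasurableSpace SU2 := borel _

instance : BorelSpace SU2 := ⟨rfl⟩

instance : ContinuousInv SU2 :=
  ⟨continuous_induced_rng.2 <| continuous_star.comp continuous_subtype_val⟩

instance : IsTopologicalGroup SU2 := {}

/-- Entries of a unitary matrix lie in the closed unit ball. -/
lemma su2_entry_normSq_sum (A : Matrix (Fin 2) (Fin 2) ℂ)
    (hA : A ∈ Matrix.unitaryGroup (Fin 2) ℂ) (i : Fin 2) :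
    A i 0 * (starRingEnd ℂ) (A i 0) + A i 1 * (starRingEnd ℂ) (A i 1) = 1 := by
  have h : A * star A = 1 := (Matrix.mem_unitaryGroup_iff.1 hA)
  have h2 := congrFun (congrFun h i) i
  simpa [Matrix.mul_apply, Fin.sum_univ_two, Matrix.star_eq_conjTranspose,
    Matrix.conjTranspose_apply, Matrix.one_apply] using h2

lemma su2_isCompact :
    IsCompact ((Matrix.specialUnitaryGroup (Fin 2) ℂ : Submonoid _) :
      Set (Matrix (Fin 2) (Fin 2) ℂ)) := by
  have hK : IsCompact (Set.univ.pi fun _ : Fin 2 =>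
      (Set.univ.pi fun _ : Fin 2 => Metric.closedBall (0 : ℂ) 1)) :=
    isCompact_univ_pi fun _ => isCompact_univ_pi fun _ => isCompact_closedBall 0 1
  apply hK.of_isClosed_subset
  · have h1 : IsClosed {A : Matrix (Fin 2) (Fin 2) ℂ | A * star A = 1} :=
      isClosed_singleton.preimage (continuous_id.matrix_mul continuous_id.matrix_conjTranspose)
    have h2 : IsClosed {A : Matrix (Fin 2) (Fin 2) ℂ | A.det = 1} :=
      isClosed_singleton.preimage continuous_id.matrix_det
    have : ((Matrix.specialUnitaryGroup (Fin 2) ℂ : Submonoid _) :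
        Set (Matrix (Fin 2) (Fin 2) ℂ)) =
        {A | A * star A = 1} ∩ {A | A.det = 1} := by
      ext A
      simp only [SetLike.mem_coe, Matrix.mem_specialUnitaryGroup_iff,
        Matrix.mem_unitaryGroup_iff, Set.mem_inter_iff, Set.mem_setOf_eq]
    rw [this]
    exact h1.inter h2
  · intro A hA
    have hAu : A ∈ Matrix.unitaryGroup (Fin 2) ℂ :=
      (Matrix.mem_specialUnitaryGroup_iff.1 hA).1
    intro i _
    intro j _
    have hsum := su2_entry_normSq_sum A hAu i
    have hterm : ∀ k : Fin 2, A i k * (starRingEnd ℂ) (A i k) = (Complex.normSq (A i k) : ℂ) := by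
      intro k; rw [Complex.mul_conj]
    rw [hterm 0, hterm 1] at hsum
    have hre : Complex.normSq (A i 0) + Complex.normSq (A i 1) = 1 := by
      exact_mod_cast hsum
    have hj : ∀ j : Fin 2, Complex.normSq (A i j) ≤ 1 := by
      rw [Fin.forall_fin_two]
      constructor <;>
        nlinarith [Complex.normSq_nonneg (A i 0), Complex.normSq_nonneg (A i 1)]
    simp only [Metric.mem_closedBall, dist_zero_right, Complex.norm_def]
    exact Real.sqrt_le_one.mpr (hj j)

instance : CompactSpace SU2 := isCompact_iff_compactSpace.mp su2_isCompact

/-- Haar probability measure on `SU(2)` is right invariant. -/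
lemma su2_isMulRightInvariant (μ : Measure SU2) [μ.IsHaarMeasure] [IsProbabilityMeasure μ] :
    μ.IsMulRightInvariant := by
  constructor
  intro g
  have hmeas : Measurable (fun x : SU2 => x * g) := (continuous_mul_right g).measurable
  have : IsProbabilityMeasure (μ.map (· * g)) :=
    Measure.isProbabilityMeasure_map hmeas.aemeasurable
  exact Measure.isHaarMeasure_eq_of_isProbabilityMeasure _ μ

/-- The diagonal element `diag(i, -i)` of `SU(2)`. -/
def zsu : SU2 :=
  ⟨!![Complex.I, 0; 0, -Complex.I], by
    constructor
    · constructor <;>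
      · ext i j
        fin_cases i <;> fin_cases j <;>
          simp [Matrix.mul_apply, Fin.sum_univ_two, Matrix.star_eq_conjTranspose,
            Matrix.conjTranspose_apply, Matrix.one_apply, Complex.ext_iff]
    · show !![Complex.I, 0; 0, -Complex.I] ∈ MonoidHom.mker (detMonoidHom (n := Fin 2) (R := ℂ))
      rw [MonoidHom.mem_mker]
      show Matrix.det !![Complex.I, 0; 0, -Complex.I] = 1
      simp [Matrix.det_fin_two_of]⟩

/-- The element `!![0, 1; -1, 0]` of `SU(2)`. -/
def wsu : SU2 :=
  ⟨!![0, 1; -1, 0], by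
    constructor
    · constructor <;>
      · ext i j
        fin_cases i <;> fin_cases j <;>
          simp [Matrix.mul_apply, Fin.sum_univ_two, Matrix.star_eq_conjTranspose,
            Matrix.conjTranspose_apply, Matrix.one_apply]
    · show !![(0:ℂ), 1; -1, 0] ∈ MonoidHom.mker (detMonoidHom (n := Fin 2) (R := ℂ))
      rw [MonoidHom.mem_mker]
      show Matrix.det !![(0:ℂ), 1; -1, 0] = 1
      simp [Matrix.det_fin_two_of]⟩

lemma continuous_entry (a b : Fin 2) : Continuous (fun g : SU2 => (g : SU2).1 a b) :=
  (continuous_apply b).comp ((continuous_apply a).comp continuous_subtype_val)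

lemma integrable_coeff (μ : Measure SU2) [IsProbabilityMeasure μ] (a b c d : Fin 2) :
    Integrable (fun g : SU2 => (g : SU2).1 a b * (starRingEnd ℂ) ((g : SU2).1 c d)) μ := by
  have hc : Continuous (fun g : SU2 => (g : SU2).1 a b * (starRingEnd ℂ) ((g : SU2).1 c d)) :=
    (continuous_entry a b).mul (continuous_star.comp (continuous_entry c d))
  have := hc.continuousOn (s := Set.univ)
  have h := this.integrableOn_compact (μ := μ) isCompact_univ
  rwa [integrableOn_univ] at h

/-- Orthogonality of matrix coefficients of the fundamental representation of `SU(2)`: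
`∫ g(a,b) conj (g(c,d)) dμ(g) = (1/2) δ_{ac} δ_{bd}`. -/
theorem haar_integral_matrix_coeff_orthogonality (μ : Measure SU2) [μ.IsHaarMeasure]
    [IsProbabilityMeasure μ] (a b c d : Fin 2) :
    ∫ g : SU2, (g : SU2).1 a b * (starRingEnd ℂ) ((g : SU2).1 c d) ∂μ =
      if a = c ∧ b = d then (1 / 2 : ℂ) else 0 := by
  have hRI : μ.IsMulRightInvariant := su2_isMulRightInvariant μ
  set F : Fin 2 → Fin 2 → Fin 2 → Fin 2 → ℂ := fun a b c d =>
    ∫ g : SU2, (g : SU2).1 a b * (starRingEnd ℂ) ((g : SU2).1 c d) ∂μ with hF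
  -- vanishing when columns differ
  have hcol : ∀ a b c d : Fin 2, b ≠ d → F a b c d = 0 := by
    intro a b c d hbd
    have hentry : ∀ (g : SU2) (i j : Fin 2),
        ((g * zsu : SU2) : Matrix (Fin 2) (Fin 2) ℂ) i j
          = g.1 i j * (if j = 0 then Complex.I else -Complex.I) := by
      intro g i j
      have h0 : ((g * zsu : SU2) : Matrix (Fin 2) (Fin 2) ℂ) = g.1 * zsu.1 := rfl
      rw [h0]
      fin_cases j <;> simp [zsu, Matrix.mul_apply, Fin.sum_univ_two]
    have key : (∫ g : SU2, ((g * zsu : SU2) : SU2).1 a b *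
        (starRingEnd ℂ) (((g * zsu : SU2) : SU2).1 c d) ∂μ) = F a b c d :=
      integral_mul_right_eq_self
        (fun g : SU2 => (g : SU2).1 a b * (starRingEnd ℂ) ((g : SU2).1 c d)) zsu
    have key2 : (∫ g : SU2, ((g * zsu : SU2) : SU2).1 a b *
        (starRingEnd ℂ) (((g * zsu : SU2) : SU2).1 c d) ∂μ) =
        ∫ g : SU2, -((g : SU2).1 a b * (starRingEnd ℂ) ((g : SU2).1 c d)) ∂μ := by
      apply integral_congr_ae
      apply Filter.Eventually.of_forall
      intro g
      show ((g * zsu : SU2) : SU2).1 a b * (starRingEnd ℂ) (((g * zsu : SU2) : SU2).1 c d) = _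
      rw [hentry g a b, hentry g c d]
      fin_cases b <;> fin_cases d <;>
        simp_all [_root_.map_mul, map_neg, Complex.conj_I] <;>
        ring_nf <;> simp [Complex.I_sq]
    rw [integral_neg] at key2
    have hnegeq : -F a b c d = F a b c d := by rw [← key2, key]
    have h2 : (2 : ℂ) * F a b c d = 0 := by linear_combination -hnegeq
    simpa using (mul_eq_zero.1 h2).resolve_left (by norm_num)
  -- vanishing when rows differ
  have hrow : ∀ a b c d : Fin 2, a ≠ c → F a b c d = 0 := by
    intro a b c d hac
    have hentry : ∀ (g : SU2) (i j : Fin 2),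
        ((zsu * g : SU2) : Matrix (Fin 2) (Fin 2) ℂ) i j
          = (if i = 0 then Complex.I else -Complex.I) * g.1 i j := by
      intro g i j
      have h0 : ((zsu * g : SU2) : Matrix (Fin 2) (Fin 2) ℂ) = zsu.1 * g.1 := rfl
      rw [h0]
      fin_cases i <;> simp [zsu, Matrix.mul_apply, Fin.sum_univ_two]
    have key : (∫ g : SU2, ((zsu * g : SU2) : SU2).1 a b *
        (starRingEnd ℂ) (((zsu * g : SU2) : SU2).1 c d) ∂μ) = F a b c d :=
      integral_mul_left_eq_self
        (fun g : SU2 => (g : SU2).1 a b * (starRingEnd ℂ) ((g : SU2).1 c d)) zsu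
    have key2 : (∫ g : SU2, ((zsu * g : SU2) : SU2).1 a b *
        (starRingEnd ℂ) (((zsu * g : SU2) : SU2).1 c d) ∂μ) =
        ∫ g : SU2, -((g : SU2).1 a b * (starRingEnd ℂ) ((g : SU2).1 c d)) ∂μ := by
      apply integral_congr_ae
      apply Filter.Eventually.of_forall
      intro g
      show ((zsu * g : SU2) : SU2).1 a b * (starRingEnd ℂ) (((zsu * g : SU2) : SU2).1 c d) = _
      rw [hentry g a b, hentry g c d]
      fin_cases a <;> fin_cases c <;>
        simp_all [_root_.map_mul, map_neg, Complex.conj_I] <;>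
        ring_nf <;> simp [Complex.I_sq]
    rw [integral_neg] at key2
    have hnegeq : -F a b c d = F a b c d := by rw [← key2, key]
    have h2 : (2 : ℂ) * F a b c d = 0 := by linear_combination -hnegeq
    simpa using (mul_eq_zero.1 h2).resolve_left (by norm_num)
  -- the diagonal coefficients
  have hswap : ∀ a : Fin 2, F a 0 a 0 = F a 1 a 1 := by
    intro a
    have hentry : ∀ (g : SU2) (i : Fin 2),
        ((g * wsu : SU2) : Matrix (Fin 2) (Fin 2) ℂ) i 0 = -g.1 i 1 := by
      intro g i
      have h0 : ((g * wsu : SU2) : Matrix (Fin 2) (Fin 2) ℂ) = g.1 * wsu.1 := rfl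
      rw [h0]
      simp [wsu, Matrix.mul_apply, Fin.sum_univ_two]
    have key : (∫ g : SU2, ((g * wsu : SU2) : SU2).1 a 0 *
        (starRingEnd ℂ) (((g * wsu : SU2) : SU2).1 a 0) ∂μ) = F a 0 a 0 :=
      integral_mul_right_eq_self
        (fun g : SU2 => (g : SU2).1 a 0 * (starRingEnd ℂ) ((g : SU2).1 a 0)) wsu
    have key2 : (∫ g : SU2, ((g * wsu : SU2) : SU2).1 a 0 *
        (starRingEnd ℂ) (((g * wsu : SU2) : SU2).1 a 0) ∂μ) = F a 1 a 1 := by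
      apply integral_congr_ae
      apply Filter.Eventually.of_forall
      intro g
      show ((g * wsu : SU2) : SU2).1 a 0 * (starRingEnd ℂ) (((g * wsu : SU2) : SU2).1 a 0) = _
      rw [hentry g a]
      simp
    rw [← key, key2]
  have hsum : ∀ a : Fin 2, F a 0 a 0 + F a 1 a 1 = 1 := by
    intro a
    have hadd := (integral_add (integrable_coeff μ a 0 a 0) (integrable_coeff μ a 1 a 1)).symm
    rw [hF]
    rw [hadd]
    have heq : (fun g : SU2 => (g : SU2).1 a 0 * (starRingEnd ℂ) ((g : SU2).1 a 0) +
        (g : SU2).1 a 1 * (starRingEnd ℂ) ((g : SU2).1 a 1)) = fun _ : SU2 => (1 : ℂ) := by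
      funext g
      exact su2_entry_normSq_sum g.1 (Submonoid.mem_inf.1 g.2).1 a
    rw [heq, integral_const]
    simp
  have hdiag : ∀ a b : Fin 2, F a b a b = 1 / 2 := by
    intro a b
    have h1 := hswap a
    have h2 := hsum a
    obtain rfl | rfl : b = 0 ∨ b = 1 := by omega
    · linear_combination h1 / 2 + h2 / 2
    · linear_combination h2 / 2 - h1 / 2
  by_cases h : a = c ∧ b = d
  · obtain ⟨rfl, rfl⟩ := h
    simpa using hdiag a b
  · rw [if_neg h]
    rcases ne_or_eq a c with hac | rfl
    · exact hrow a b c d hac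
    · have hbd : b ≠ d := by tauto
      exact hcol a b a d hbd
end
end

section
/- For all natural numbers m and n, the Haar integral ∫_{SU(2)} U_m(Re(trace g)/2) · U_n(Re(trace g)/2) dμ(g) equals 1 if m = n and 0 otherwise. (This is the orthonormality of the SU(2) characters χ_j, j = m/2, equivalently the statement that each Wilson loop state W_j(g) = χ_j(g) is normalized, ∫ dg |χ_j(g)|² = 1, and that distinct Wilson loop states are orthogonal.) -/
open MeasureTheory Matrix

noncomputable section

open Complex
instance : MeasurableMul SU2 := by
  refine ⟨fun c => Continuous.measurable ?_, fun c => Continuous.measurable ?_⟩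
  · have h1 : Continuous fun x : SU2 => c.1 * x.1 :=
      continuous_const.matrix_mul continuous_subtype_val
    exact h1.subtype_mk _
  · have h1 : Continuous fun x : SU2 => x.1 * c.1 :=
      continuous_subtype_val.matrix_mul continuous_const
    exact h1.subtype_mk _

lemma su2_col_norm (A : Matrix (Fin 2) (Fin 2) ℂ) (hA : A ∈ Matrix.specialUnitaryGroup (Fin 2) ℂ)
    (j : Fin 2) : Complex.normSq (A 0 j) + Complex.normSq (A 1 j) = 1 := by
  have h : star A * A = 1 := (Matrix.mem_unitaryGroup_iff'.1 (Matrix.mem_specialUnitaryGroup_iff.1 hA).1)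
  have h2 : (star A * A) j j = 1 := by rw [h]; simp
  rw [Matrix.mul_apply] at h2
  have h3 : ∑ k : Fin 2, (starRingEnd ℂ) (A k j) * A k j = 1 := by
    simpa [Matrix.star_apply] using h2
  have e : ∀ z : ℂ, (starRingEnd ℂ) z * z = (Complex.normSq z : ℂ) := fun z => by
    rw [mul_comm, Complex.mul_conj]
  rw [Fin.sum_univ_two, e, e, ← Complex.ofReal_add] at h3
  exact_mod_cast h3

lemma su2_entry_norm (A : Matrix (Fin 2) (Fin 2) ℂ) (hA : A ∈ Matrix.specialUnitaryGroup (Fin 2) ℂ)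
    (i j : Fin 2) : ‖A i j‖ ≤ 1 := by
  have h := su2_col_norm A hA j
  have h1 : Complex.normSq (A i j) ≤ 1 := by
    have h0 := Complex.normSq_nonneg (A 0 j)
    have h1' := Complex.normSq_nonneg (A 1 j)
    fin_cases i
    · simpa using by nlinarith
    · simpa using by nlinarith
  rw [Complex.norm_def]
  exact Real.sqrt_le_one.mpr h1

instance inst_s2 : CompactSpace SU2 := by
  have hsub : (Matrix.specialUnitaryGroup (Fin 2) ℂ : Set (Matrix (Fin 2) (Fin 2) ℂ)) ⊆
      Set.univ.pi fun _ : Fin 2 => Set.univ.pi fun _ : Fin 2 => Metric.closedBall (0:ℂ) 1 := by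
    intro A hA
    refine Set.mem_univ_pi.mpr fun i => Set.mem_univ_pi.mpr fun j => ?_
    rw [Metric.mem_closedBall]
    simpa [Complex.dist_eq] using su2_entry_norm A hA i j
  have hK : IsCompact (Set.univ.pi fun _ : Fin 2 => Set.univ.pi fun _ : Fin 2 =>
      Metric.closedBall (0:ℂ) 1) :=
    isCompact_univ_pi fun _ => isCompact_univ_pi fun _ => isCompact_closedBall _ _
  have hclosed : IsClosed (Matrix.specialUnitaryGroup (Fin 2) ℂ : Set (Matrix (Fin 2) (Fin 2) ℂ)) := by
    have heq : (Matrix.specialUnitaryGroup (Fin 2) ℂ : Set (Matrix (Fin 2) (Fin 2) ℂ)) =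
        (fun A : Matrix (Fin 2) (Fin 2) ℂ => (A * star A, A.det)) ⁻¹' {((1 : Matrix (Fin 2) (Fin 2) ℂ), (1:ℂ))} := by
      ext A
      simp only [Set.mem_preimage, Set.mem_singleton_iff, Prod.mk.injEq, SetLike.mem_coe]
      rw [Matrix.mem_specialUnitaryGroup_iff, Matrix.mem_unitaryGroup_iff]
    rw [heq]
    exact IsClosed.preimage
      ((continuous_id.matrix_mul continuous_id.matrix_conjTranspose).prodMk
        continuous_id.matrix_det) isClosed_singleton
  exact isCompact_iff_compactSpace.mp (hK.of_isClosed_subset hclosed hsub)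

lemma su2_star_eq_adjugate (g : SU2) : star g.1 = adjugate g.1 := by
  have h1 : star g.1 * g.1 = 1 :=
    Matrix.mem_unitaryGroup_iff'.1 (Matrix.mem_specialUnitaryGroup_iff.1 g.2).1
  have hdet : g.1.det = 1 := (Matrix.mem_specialUnitaryGroup_iff.1 g.2).2
  have h2 : g.1 * adjugate g.1 = 1 := by
    rw [Matrix.mul_adjugate, hdet, one_smul]
  calc star g.1 = star g.1 * (g.1 * adjugate g.1) := by rw [h2, mul_one]
    _ = (star g.1 * g.1) * adjugate g.1 := by rw [mul_assoc]
    _ = adjugate g.1 := by rw [h1, one_mul]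

lemma su2_d_eq (g : SU2) : g.1 1 1 = (starRingEnd ℂ) (g.1 0 0) := by
  have h := congrFun (congrFun (su2_star_eq_adjugate g) 1) 1
  rw [Matrix.adjugate_fin_two] at h
  simp only [Matrix.star_apply, Matrix.cons_val', Matrix.cons_val_one, Matrix.head_cons,
    Matrix.empty_val', Matrix.cons_val_fin_one, Matrix.head_fin_const] at h
  -- h : conj (g.1 1 1) = g.1 0 0
  have := congrArg (starRingEnd ℂ) h
  simpa using this

def torSU2 (φ : ℝ) : SU2 :=
  ⟨!![Complex.exp (φ * Complex.I), 0; 0, Complex.exp (-(φ * Complex.I))], by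
    rw [Matrix.mem_specialUnitaryGroup_iff]
    constructor
    · rw [Matrix.mem_unitaryGroup_iff]
      have : star !![Complex.exp (φ * Complex.I), 0; 0, Complex.exp (-(φ * Complex.I))] =
          !![Complex.exp (-(φ * Complex.I)), 0; 0, Complex.exp (φ * Complex.I)] := by
        rw [Matrix.star_eq_conjTranspose]
        ext i j
        fin_cases i <;> fin_cases j <;>
          simp [Matrix.conjTranspose_apply, ← Complex.exp_conj, Complex.conj_ofReal]
      rw [this, Matrix.mul_fin_two, Matrix.one_fin_two]
      ext i j
      fin_cases i <;> fin_cases j <;> simp [← Complex.exp_add]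
    · rw [Matrix.det_fin_two_of, ← Complex.exp_add]
      norm_num⟩

def rotSU2 (α β : ℝ) (h : α ^ 2 + β ^ 2 = 1) : SU2 :=
  ⟨!![(α : ℂ), (β : ℂ); -(β : ℂ), (α : ℂ)], by
    rw [Matrix.mem_specialUnitaryGroup_iff]
    have hc : ((α : ℂ)) ^ 2 + ((β : ℂ)) ^ 2 = 1 := by exact_mod_cast congrArg (Complex.ofReal) h
    constructor
    · rw [Matrix.mem_unitaryGroup_iff]
      have hst : star !![(α : ℂ), (β : ℂ); -(β : ℂ), (α : ℂ)] =
          !![(α : ℂ), -(β : ℂ); (β : ℂ), (α : ℂ)] := by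
        rw [Matrix.star_eq_conjTranspose]
        ext i j
        fin_cases i <;> fin_cases j <;>
          simp [Matrix.conjTranspose_apply, Complex.conj_ofReal]
      rw [hst, Matrix.mul_fin_two, Matrix.one_fin_two]
      congr 1 <;> try ring_nf
      ext i j
      fin_cases i <;> fin_cases j <;> simp <;> linear_combination hc
    · rw [Matrix.det_fin_two_of]
      linear_combination hc⟩

lemma su2_mul_entry (h g : SU2) (i j : Fin 2) :
    (h * g).1 i j = h.1 i 0 * g.1 0 j + h.1 i 1 * g.1 1 j := by
  show (h.1 * g.1) i j = _
  rw [Matrix.mul_apply, Fin.sum_univ_two]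

lemma tor_mul_00 (φ : ℝ) (g : SU2) :
    (torSU2 φ * g).1 0 0 = Complex.exp (φ * Complex.I) * g.1 0 0 := by
  rw [su2_mul_entry]; simp [torSU2]

lemma tor_mul_10 (φ : ℝ) (g : SU2) :
    (torSU2 φ * g).1 1 0 = Complex.exp (-(φ * Complex.I)) * g.1 1 0 := by
  rw [su2_mul_entry]; simp [torSU2]

lemma rot_mul_00 (α β : ℝ) (h : α ^ 2 + β ^ 2 = 1) (g : SU2) :
    (rotSU2 α β h * g).1 0 0 = α * g.1 0 0 + β * g.1 1 0 := by
  rw [su2_mul_entry]; simp [rotSU2]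

lemma rot_mul_10 (α β : ℝ) (h : α ^ 2 + β ^ 2 = 1) (g : SU2) :
    (rotSU2 α β h * g).1 1 0 = -β * g.1 0 0 + α * g.1 1 0 := by
  rw [su2_mul_entry]; simp [rotSU2]

/-! ### Integration set-up -/

def aE (g : SU2) : ℂ := g.1 0 0
def cE (g : SU2) : ℂ := g.1 1 0

lemma cont_aE : Continuous aE := (continuous_apply (0:Fin 2)).comp ((continuous_apply (0:Fin 2)).comp continuous_subtype_val)
lemma cont_cE : Continuous cE := (continuous_apply (0:Fin 2)).comp ((continuous_apply (1:Fin 2)).comp continuous_subtype_val)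

variable (μ : Measure SU2) [μ.IsHaarMeasure] [IsProbabilityMeasure μ]

lemma su2_integrable {E : Type*} [NormedAddCommGroup E] {f : SU2 → E} (hf : Continuous f) :
    Integrable f μ :=
  hf.integrable_of_hasCompactSupport (isClosed_tsupport f).isCompact

/-- mixed complex moments -/
def Bm (p q r s : ℕ) : ℂ :=
  ∫ g, aE g ^ p * cE g ^ q * (starRingEnd ℂ) (aE g) ^ r * (starRingEnd ℂ) (cE g) ^ s ∂μ

/-- mixed absolute moments -/
def Km (p q : ℕ) : ℝ := ∫ g, Complex.normSq (aE g) ^ p * Complex.normSq (cE g) ^ q ∂μ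

lemma cont_Bm_integrand (p q r s : ℕ) :
    Continuous fun g : SU2 =>
      aE g ^ p * cE g ^ q * (starRingEnd ℂ) (aE g) ^ r * (starRingEnd ℂ) (cE g) ^ s :=
  (((cont_aE.pow p).mul (cont_cE.pow q)).mul ((continuous_star.comp cont_aE).pow r)).mul
    ((continuous_star.comp cont_cE).pow s)

lemma Bm_eq_zero {p q r s : ℕ} (h : (p:ℤ) - r - ((q:ℤ) - s) ≠ 0) : Bm μ p q r s = 0 := by
  set d : ℤ := (p:ℤ) - r - ((q:ℤ) - s) with hd
  set φ : ℝ := Real.pi / d with hφ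
  set f : SU2 → ℂ := fun g =>
    aE g ^ p * cE g ^ q * (starRingEnd ℂ) (aE g) ^ r * (starRingEnd ℂ) (cE g) ^ s with hf
  have inv : ∫ g, f (torSU2 φ * g) ∂μ = ∫ g, f g ∂μ := integral_mul_left_eq_self f _
  have key : ∀ g : SU2, f (torSU2 φ * g) = (-1 : ℂ) * f g := by
    intro g
    have e1 : aE (torSU2 φ * g) = Complex.exp (φ * Complex.I) * aE g := tor_mul_00 φ g
    have e2 : cE (torSU2 φ * g) = Complex.exp (-(φ * Complex.I)) * cE g := tor_mul_10 φ g
    have c1 : (starRingEnd ℂ) (Complex.exp (φ * Complex.I)) = Complex.exp (-(φ * Complex.I)) := by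
      rw [← Complex.exp_conj]; congr 1; simp [Complex.conj_ofReal]
    have c2 : (starRingEnd ℂ) (Complex.exp (-(φ * Complex.I))) = Complex.exp (φ * Complex.I) := by
      rw [← Complex.exp_conj]; congr 1; simp [Complex.conj_ofReal]
    have hphase : Complex.exp (φ * Complex.I) ^ (p + s) *
        Complex.exp (-(φ * Complex.I)) ^ (q + r) = -1 := by
      rw [← Complex.exp_nat_mul, ← Complex.exp_nat_mul, ← Complex.exp_add]
      have harg : ((p + s : ℕ) : ℂ) * (φ * Complex.I) + ((q + r : ℕ) : ℂ) * -(φ * Complex.I) =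
          ((d : ℝ) * φ : ℝ) * Complex.I := by push_cast [hd]; ring
      rw [harg]
      have hdφ : (d : ℝ) * φ = Real.pi := by
        rw [hφ]; field_simp
      rw [hdφ, Complex.exp_pi_mul_I]
    calc f (torSU2 φ * g) = (Complex.exp (φ * Complex.I) ^ (p + s) *
          Complex.exp (-(φ * Complex.I)) ^ (q + r)) * f g := by
          simp only [hf, e1, e2, _root_.map_mul, c1, c2, mul_pow, pow_add]
          ring
      _ = (-1 : ℂ) * f g := by rw [hphase]
  rw [funext key] at inv
  rw [integral_const_mul] at inv
  have : Bm μ p q r s = ∫ g, f g ∂μ := rfl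
  rw [this]
  linear_combination (-(1:ℂ)/2) * inv

lemma Bm_integrand_ofReal (p q : ℕ) (g : SU2) :
    aE g ^ p * cE g ^ q * (starRingEnd ℂ) (aE g) ^ p * (starRingEnd ℂ) (cE g) ^ q =
      ((Complex.normSq (aE g) ^ p * Complex.normSq (cE g) ^ q : ℝ) : ℂ) := by
  push_cast
  rw [← Complex.mul_conj, ← Complex.mul_conj]
  ring

lemma Bm_diag (p q : ℕ) : Bm μ p q p q = ((Km μ p q : ℝ) : ℂ) := by
  rw [Bm, Km]
  have : (fun g : SU2 => aE g ^ p * cE g ^ q * (starRingEnd ℂ) (aE g) ^ p *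
      (starRingEnd ℂ) (cE g) ^ q) = fun g : SU2 =>
        ((Complex.normSq (aE g) ^ p * Complex.normSq (cE g) ^ q : ℝ) : ℂ) := by
    funext g; exact Bm_integrand_ofReal p q g
  rw [this]
  exact integral_ofReal

lemma Km_swap (p q : ℕ) : Km μ p q = Km μ q p := by
  have inv := integral_mul_left_eq_self (μ := μ)
    (fun g => Complex.normSq (aE g) ^ q * Complex.normSq (cE g) ^ p)
    (rotSU2 0 1 (by norm_num))
  have hpt : ∀ g : SU2,
      Complex.normSq (aE (rotSU2 0 1 (by norm_num) * g)) ^ q *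
        Complex.normSq (cE (rotSU2 0 1 (by norm_num) * g)) ^ p =
      Complex.normSq (aE g) ^ p * Complex.normSq (cE g) ^ q := by
    intro g
    have e1 : aE (rotSU2 0 1 (by norm_num) * g) = cE g := by
      show (rotSU2 0 1 (by norm_num) * g).1 0 0 = cE g
      rw [rot_mul_00]; simp [aE, cE]
    have e2 : cE (rotSU2 0 1 (by norm_num) * g) = -aE g := by
      show (rotSU2 0 1 (by norm_num) * g).1 1 0 = -aE g
      rw [rot_mul_10]; simp [aE, cE]
    rw [e1, e2, Complex.normSq_neg]
    ring
  rw [Km, Km, ← inv]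
  congr 1
  funext g
  exact (hpt g).symm

lemma su2_aE_cE (g : SU2) : Complex.normSq (aE g) + Complex.normSq (cE g) = 1 :=
  su2_col_norm g.1 g.2 0

lemma Km_col (p : ℕ) : Km μ p 1 = Km μ p 0 - Km μ (p+1) 0 := by
  have hpt : ∀ g : SU2, Complex.normSq (aE g) ^ p * Complex.normSq (cE g) ^ 1 =
      Complex.normSq (aE g) ^ p * Complex.normSq (cE g) ^ 0 -
        Complex.normSq (aE g) ^ (p+1) * Complex.normSq (cE g) ^ 0 := by
    intro g
    have := su2_aE_cE g
    have hc : Complex.normSq (cE g) = 1 - Complex.normSq (aE g) := by linarith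
    rw [hc]; ring
  rw [Km, Km, Km, ← integral_sub]
  · congr 1; funext g; exact hpt g
  · exact su2_integrable μ (((Complex.continuous_normSq.comp cont_aE).pow p).mul
      ((Complex.continuous_normSq.comp cont_cE).pow 0))
  · exact su2_integrable μ (((Complex.continuous_normSq.comp cont_aE).pow (p+1)).mul
      ((Complex.continuous_normSq.comp cont_cE).pow 0))

lemma rot_sum (j : ℕ) (α β : ℝ) (h : α ^ 2 + β ^ 2 = 1) :
    ∑ i ∈ Finset.range (j+1),
        ((j.choose i : ℝ))^2 * α^(2*i) * β^(2*(j-i)) * Km μ i (j-i) = Km μ j 0 := by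
  have key := integral_mul_left_eq_self (μ := μ)
    (fun g => aE g ^ j * (starRingEnd ℂ) (aE g) ^ j) (rotSU2 α β h)
  -- rewrite the left side of key
  have expand : (fun g : SU2 => aE (rotSU2 α β h * g) ^ j *
      (starRingEnd ℂ) (aE (rotSU2 α β h * g)) ^ j) = fun g : SU2 =>
      ∑ i ∈ Finset.range (j+1), ∑ l ∈ Finset.range (j+1),
        (((j.choose i : ℂ)) * ((j.choose l : ℂ)) * ((α:ℂ)^(i+l) * (β:ℂ)^((j-i)+(j-l)))) *
          (aE g ^ i * cE g ^ (j-i) * (starRingEnd ℂ) (aE g) ^ l *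
            (starRingEnd ℂ) (cE g) ^ (j-l)) := by
    funext g
    have e1 : aE (rotSU2 α β h * g) = (α:ℂ) * aE g + (β:ℂ) * cE g := rot_mul_00 α β h g
    rw [e1]
    have e2 : (starRingEnd ℂ) ((α:ℂ) * aE g + (β:ℂ) * cE g) =
        (α:ℂ) * (starRingEnd ℂ) (aE g) + (β:ℂ) * (starRingEnd ℂ) (cE g) := by
      rw [map_add, _root_.map_mul, _root_.map_mul, Complex.conj_ofReal, Complex.conj_ofReal]
    rw [e2, add_pow, add_pow, Finset.sum_mul_sum]
    refine Finset.sum_congr rfl fun i hi => Finset.sum_congr rfl fun l hl => ?_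
    rw [mul_pow, mul_pow, mul_pow, mul_pow, pow_add, pow_add]
    ring
  rw [expand] at key
  have hint : ∀ (i l : ℕ), Integrable (fun g : SU2 =>
      (((j.choose i : ℂ)) * ((j.choose l : ℂ)) * ((α:ℂ)^(i+l) * (β:ℂ)^((j-i)+(j-l)))) *
        (aE g ^ i * cE g ^ (j-i) * (starRingEnd ℂ) (aE g) ^ l *
          (starRingEnd ℂ) (cE g) ^ (j-l))) μ :=
    fun i l => su2_integrable μ (continuous_const.mul (cont_Bm_integrand i (j-i) l (j-l)))
  rw [integral_finset_sum _ (fun i _ => integrable_finset_sum _ (fun l _ => hint i l))] at key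
  have key2 : ∀ i ∈ Finset.range (j+1),
      (∫ g, ∑ l ∈ Finset.range (j+1),
        (((j.choose i : ℂ)) * ((j.choose l : ℂ)) * ((α:ℂ)^(i+l) * (β:ℂ)^((j-i)+(j-l)))) *
          (aE g ^ i * cE g ^ (j-i) * (starRingEnd ℂ) (aE g) ^ l *
            (starRingEnd ℂ) (cE g) ^ (j-l)) ∂μ) =
      ((j.choose i : ℂ))^2 * ((α:ℂ)^(2*i) * (β:ℂ)^(2*(j-i))) * ((Km μ i (j-i) : ℝ) : ℂ) := by
    intro i hi
    rw [integral_finset_sum _ (fun l _ => hint i l)]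
    have hterm : ∀ l ∈ Finset.range (j+1), (∫ g,
        (((j.choose i : ℂ)) * ((j.choose l : ℂ)) * ((α:ℂ)^(i+l) * (β:ℂ)^((j-i)+(j-l)))) *
          (aE g ^ i * cE g ^ (j-i) * (starRingEnd ℂ) (aE g) ^ l *
            (starRingEnd ℂ) (cE g) ^ (j-l)) ∂μ) =
        if l = i then ((j.choose i : ℂ))^2 * ((α:ℂ)^(2*i) * (β:ℂ)^(2*(j-i))) *
          ((Km μ i (j-i) : ℝ) : ℂ) else 0 := by
      intro l hl
      rw [integral_const_mul]
      by_cases hli : l = i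
      · subst hli
        rw [if_pos rfl]
        have : (∫ g, aE g ^ l * cE g ^ (j-l) * (starRingEnd ℂ) (aE g) ^ l *
            (starRingEnd ℂ) (cE g) ^ (j-l) ∂μ) = ((Km μ l (j-l) : ℝ) : ℂ) := Bm_diag μ l (j-l)
        rw [this]
        rw [← two_mul, show (j-l)+(j-l) = 2*(j-l) by ring]
        ring
      · rw [if_neg hli]
        have hBz : Bm μ i (j-i) l (j-l) = 0 := by
          apply Bm_eq_zero
          have hi2 : i ≤ j := Nat.lt_succ_iff.mp (Finset.mem_range.mp hi)
          have hl2 : l ≤ j := Nat.lt_succ_iff.mp (Finset.mem_range.mp hl)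
          have e1 : ((j-i : ℕ) : ℤ) = (j:ℤ) - i := by omega
          have e2 : ((j-l : ℕ) : ℤ) = (j:ℤ) - l := by omega
          rw [e1, e2]
          intro hcon
          apply hli
          omega
        have : (∫ g, aE g ^ i * cE g ^ (j-i) * (starRingEnd ℂ) (aE g) ^ l *
            (starRingEnd ℂ) (cE g) ^ (j-l) ∂μ) = 0 := hBz
        rw [this, mul_zero]
    rw [Finset.sum_congr rfl hterm, Finset.sum_ite_eq' (Finset.range (j+1)) i]
    rw [if_pos hi]
  rw [Finset.sum_congr rfl key2] at key
  have keyR : Bm μ j 0 j 0 = ((Km μ j 0 : ℝ) : ℂ) := Bm_diag μ j 0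
  have keyR' : (∫ g, aE g ^ j * (starRingEnd ℂ) (aE g) ^ j ∂μ) = ((Km μ j 0 : ℝ) : ℂ) := by
    rw [← keyR, Bm]
    congr 1; funext g; ring
  rw [keyR'] at key
  have := key
  -- now decomplexify
  have hcast : ((∑ i ∈ Finset.range (j+1),
      ((j.choose i : ℝ))^2 * α^(2*i) * β^(2*(j-i)) * Km μ i (j-i) : ℝ) : ℂ) =
      ((Km μ j 0 : ℝ) : ℂ) := by
    rw [← this]
    push_cast
    refine Finset.sum_congr rfl fun i _ => by ring
  exact_mod_cast hcast

lemma coeff_zero_one_sub_X_pow (n : ℕ) : (((1 : Polynomial ℝ) - Polynomial.X)^n).coeff 0 = 1 := by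
  rw [Polynomial.coeff_zero_eq_eval_zero]
  simp

lemma coeff_one_one_sub_X_pow (n : ℕ) : (((1 : Polynomial ℝ) - Polynomial.X)^n).coeff 1 = -(n:ℝ) := by
  induction n with
  | zero => simp [Polynomial.coeff_one]
  | succ n ih =>
    have h : ((1 : Polynomial ℝ) - Polynomial.X)^(n+1) =
        ((1 : Polynomial ℝ) - Polynomial.X)^n - ((1 : Polynomial ℝ) - Polynomial.X)^n *
          Polynomial.X := by ring
    rw [h, Polynomial.coeff_sub, ih, Polynomial.coeff_mul_X, coeff_zero_one_sub_X_pow]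
    push_cast
    ring

lemma Km_rec (j : ℕ) (hj : 1 ≤ j) : (j:ℝ) * Km μ 1 (j-1) = Km μ 0 j := by
  set P : Polynomial ℝ := (∑ i ∈ Finset.range (j+1),
      Polynomial.C (((j.choose i):ℝ)^2 * Km μ i (j-i)) *
        (Polynomial.X^i * ((1:Polynomial ℝ) - Polynomial.X)^(j-i))) -
      Polynomial.C (Km μ j 0) with hPdef
  have hroots : ∀ s ∈ Set.Icc (0:ℝ) 1, P.IsRoot s := by
    intro s hs
    have hα : (Real.sqrt s)^2 = s := Real.sq_sqrt hs.1
    have hβ : (Real.sqrt (1-s))^2 = 1-s := Real.sq_sqrt (by linarith [hs.2])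
    have h1 : (Real.sqrt s)^2 + (Real.sqrt (1-s))^2 = 1 := by rw [hα, hβ]; ring
    have hsum := rot_sum μ j _ _ h1
    have heval : P.eval s = (∑ i ∈ Finset.range (j+1),
        ((j.choose i):ℝ)^2 * (Real.sqrt s)^(2*i) * (Real.sqrt (1-s))^(2*(j-i)) *
          Km μ i (j-i)) - Km μ j 0 := by
      rw [hPdef]
      rw [Polynomial.eval_sub, Polynomial.eval_finset_sum, Polynomial.eval_C]
      congr 1
      refine Finset.sum_congr rfl fun i _ => ?_
      rw [Polynomial.eval_mul, Polynomial.eval_C, Polynomial.eval_mul, Polynomial.eval_pow,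
        Polynomial.eval_X, Polynomial.eval_pow, Polynomial.eval_sub, Polynomial.eval_one,
        Polynomial.eval_X, pow_mul, pow_mul, hα, hβ]
      ring
    rw [Polynomial.IsRoot, heval, hsum, sub_self]
  have hP : P = 0 := by
    apply Polynomial.eq_zero_of_infinite_isRoot
    have hIcc : (Set.Icc (0:ℝ) 1).Infinite := Set.Icc_infinite (by norm_num)
    exact hIcc.mono fun s hs => hroots s hs
  have hco : P.coeff 1 = 0 := by rw [hP]; simp
  have hterm : ∀ i ∈ Finset.range (j+1),
      (Polynomial.C (((j.choose i):ℝ)^2 * Km μ i (j-i)) *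
        (Polynomial.X^i * ((1:Polynomial ℝ) - Polynomial.X)^(j-i))).coeff 1 =
      (if i = 0 then -(j:ℝ) * Km μ 0 j else 0) +
        (if i = 1 then ((j:ℝ))^2 * Km μ 1 (j-1) else 0) := by
    intro i _
    match i with
    | 0 =>
      simp only [pow_zero, one_mul, Nat.sub_zero, Polynomial.coeff_C_mul,
        coeff_one_one_sub_X_pow, Nat.choose_zero_right]
      norm_num
      ring
    | 1 =>
      simp only [pow_one, Polynomial.coeff_C_mul, Polynomial.coeff_X_mul,
        coeff_zero_one_sub_X_pow, Nat.choose_one_right]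
      norm_num
    | (k+2) =>
      rw [if_neg (by omega : ¬ (k+2 = 0)), if_neg (by omega : ¬ (k+2 = 1)), add_zero]
      rw [Polynomial.coeff_C_mul, mul_comm (Polynomial.X^(k+2)),
        Polynomial.coeff_mul_X_pow']
      rw [if_neg (by omega)]
      simp
  have hsumco : P.coeff 1 = -(j:ℝ) * Km μ 0 j + ((j:ℝ))^2 * Km μ 1 (j-1) := by
    rw [hPdef, Polynomial.coeff_sub, Polynomial.finset_sum_coeff,
      Finset.sum_congr rfl hterm, Finset.sum_add_distrib,
      Finset.sum_ite_eq' (Finset.range (j+1)) 0, Finset.sum_ite_eq' (Finset.range (j+1)) 1]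
    rw [if_pos (Finset.mem_range.mpr (by omega)), if_pos (Finset.mem_range.mpr (by omega))]
    simp
  rw [hco] at hsumco
  have hj' : (j:ℝ) ≠ 0 := by positivity
  apply mul_left_cancel₀ hj'
  have h2 : ((j:ℝ))^2 * Km μ 1 (j-1) = (j:ℝ) * Km μ 0 j := by linarith
  calc (j:ℝ) * ((j:ℝ) * Km μ 1 (j-1)) = ((j:ℝ))^2 * Km μ 1 (j-1) := by ring
    _ = (j:ℝ) * Km μ 0 j := h2

lemma Km_zero_zero : Km μ 0 0 = 1 := by
  rw [Km]
  simp

lemma N_val (j : ℕ) : Km μ j 0 = 1/(j+1) := by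
  induction j with
  | zero => simpa using Km_zero_zero μ
  | succ j ih =>
    have h1 := Km_rec μ (j+1) (by omega)
    have h2 : Km μ 1 j = Km μ j 1 := Km_swap μ 1 j
    have h3 : Km μ j 1 = Km μ j 0 - Km μ (j+1) 0 := Km_col μ j
    have h4 : Km μ 0 (j+1) = Km μ (j+1) 0 := Km_swap μ 0 (j+1)
    rw [show j + 1 - 1 = j from rfl, h2, h3, h4, ih] at h1
    have hj1 : ((j:ℝ)+1) ≠ 0 := by positivity
    push_cast at h1 ⊢
    field_simp at h1 ⊢
    linarith

lemma M_base (k : ℕ) : ((∫ g, (aE g).re ^ k ∂μ : ℝ) : ℂ) =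
    (1/2^k : ℂ) * ∑ i ∈ Finset.range (k+1), (k.choose i : ℂ) * Bm μ i 0 (k-i) 0 := by
  have hpt : (fun g : SU2 => (((aE g).re ^ k : ℝ) : ℂ)) = fun g : SU2 =>
      (1/2^k : ℂ) * ∑ i ∈ Finset.range (k+1),
        (k.choose i : ℂ) * (aE g ^ i * cE g ^ 0 * (starRingEnd ℂ) (aE g) ^ (k-i) *
          (starRingEnd ℂ) (cE g) ^ 0) := by
    funext g
    have h1 : (((aE g).re : ℝ) : ℂ) = (aE g + (starRingEnd ℂ) (aE g)) / 2 := by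
      rw [Complex.add_conj]
      push_cast
      ring
    calc (((aE g).re ^ k : ℝ) : ℂ) = ((aE g + (starRingEnd ℂ) (aE g)) / 2) ^ k := by
          push_cast [h1]
          rfl
      _ = (1/2^k : ℂ) * (aE g + (starRingEnd ℂ) (aE g)) ^ k := by
          rw [div_pow]; ring
      _ = _ := by
          rw [add_pow]
          congr 1
          refine Finset.sum_congr rfl fun i _ => by ring
  calc ((∫ g, (aE g).re ^ k ∂μ : ℝ) : ℂ) = ∫ g, (((aE g).re ^ k : ℝ) : ℂ) ∂μ :=
        (integral_ofReal).symm
    _ = ∫ g, (1/2^k : ℂ) * ∑ i ∈ Finset.range (k+1),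
          (k.choose i : ℂ) * (aE g ^ i * cE g ^ 0 * (starRingEnd ℂ) (aE g) ^ (k-i) *
            (starRingEnd ℂ) (cE g) ^ 0) ∂μ := by rw [hpt]
    _ = (1/2^k : ℂ) * ∫ g, ∑ i ∈ Finset.range (k+1),
          (k.choose i : ℂ) * (aE g ^ i * cE g ^ 0 * (starRingEnd ℂ) (aE g) ^ (k-i) *
            (starRingEnd ℂ) (cE g) ^ 0) ∂μ := integral_const_mul _ _
    _ = (1/2^k : ℂ) * ∑ i ∈ Finset.range (k+1), ∫ g,
          (k.choose i : ℂ) * (aE g ^ i * cE g ^ 0 * (starRingEnd ℂ) (aE g) ^ (k-i) *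
            (starRingEnd ℂ) (cE g) ^ 0) ∂μ := by
        rw [integral_finset_sum _ (fun i _ => (su2_integrable μ
          (continuous_const.mul (cont_Bm_integrand i 0 (k-i) 0)) : Integrable (fun g : SU2 =>
            (k.choose i : ℂ) * (aE g ^ i * cE g ^ 0 * (starRingEnd ℂ) (aE g) ^ (k-i) *
              (starRingEnd ℂ) (cE g) ^ 0)) μ))]
    _ = _ := by
        congr 1
        refine Finset.sum_congr rfl fun i _ => ?_
        rw [integral_const_mul]
        rfl

lemma M_odd (k : ℕ) (hk : ¬ Even k) : ∫ g, (aE g).re ^ k ∂μ = 0 := by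
  have hb := M_base μ k
  have hz : ∀ i ∈ Finset.range (k+1), (k.choose i : ℂ) * Bm μ i 0 (k-i) 0 = 0 := by
    intro i hi
    have hik : i ≤ k := Nat.lt_succ_iff.mp (Finset.mem_range.mp hi)
    have : Bm μ i 0 (k-i) 0 = 0 := by
      apply Bm_eq_zero
      have : ((k-i : ℕ) : ℤ) = (k:ℤ) - i := by omega
      rw [this]
      intro hcon
      exact hk ⟨i, by omega⟩
    rw [this, mul_zero]
  rw [Finset.sum_congr rfl hz, Finset.sum_const, smul_zero, mul_zero] at hb
  exact_mod_cast hb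

lemma M_even (j : ℕ) : ∫ g, (aE g).re ^ (2*j) ∂μ = ((2*j).choose j : ℝ)/((j+1) * 4^j) := by
  have hb := M_base μ (2*j)
  have hcol : ∑ i ∈ Finset.range (2*j+1), ((2*j).choose i : ℂ) * Bm μ i 0 (2*j-i) 0 =
      ((2*j).choose j : ℂ) * Bm μ j 0 (2*j-j) 0 := by
    apply Finset.sum_eq_single_of_mem j (Finset.mem_range.mpr (by omega))
    intro i hi hij
    have hik : i ≤ 2*j := Nat.lt_succ_iff.mp (Finset.mem_range.mp hi)
    have : Bm μ i 0 (2*j-i) 0 = 0 := by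
      apply Bm_eq_zero
      have : ((2*j-i : ℕ) : ℤ) = (2*j:ℤ) - i := by omega
      rw [this]
      intro hcon
      exact hij (by omega)
    rw [this, mul_zero]
  rw [show 2*j - j = j by omega] at hcol
  rw [hcol, Bm_diag, N_val] at hb
  have h4 : ((1:ℂ)/2^(2*j)) = 1/4^j := by
    rw [pow_mul]
    norm_num
  rw [h4] at hb
  have : ((∫ g, (aE g).re ^ (2*j) ∂μ : ℝ) : ℂ) =
      ((((2*j).choose j : ℝ)/((j+1) * 4^j) : ℝ) : ℂ) := by
    rw [hb]
    push_cast
    field_simp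
  exact_mod_cast this

/-! ### Trigonometric side -/

open intervalIntegral Real in
lemma C_rec (k : ℕ) : (∫ x in (0:ℝ)..π, Real.cos x ^ (k+2)) =
    ((k:ℝ)+1)/((k:ℝ)+2) * ∫ x in (0:ℝ)..π, Real.cos x ^ k := by
  rw [integral_cos_pow k]
  simp [Real.sin_pi]

open intervalIntegral Real in
lemma tm_eq (k : ℕ) : (∫ x in (0:ℝ)..π, Real.cos x ^ k * Real.sin x ^ 2) =
    (∫ x in (0:ℝ)..π, Real.cos x ^ k) - ∫ x in (0:ℝ)..π, Real.cos x ^ (k+2) := by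
  rw [← intervalIntegral.integral_sub (f := fun x => Real.cos x ^ k)
    (g := fun x => Real.cos x ^ (k+2)) ((Real.continuous_cos.pow k).intervalIntegrable 0 π)
    ((Real.continuous_cos.pow (k+2)).intervalIntegrable 0 π)]
  congr 1
  funext x
  have : Real.sin x ^ 2 = 1 - Real.cos x ^ 2 := by
    rw [Real.sin_sq]
  rw [this]
  ring

open Real in
lemma tm_val (k : ℕ) : (∫ x in (0:ℝ)..π, Real.cos x ^ k * Real.sin x ^ 2) =
    (∫ x in (0:ℝ)..π, Real.cos x ^ k) / ((k:ℝ)+2) := by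
  rw [tm_eq, C_rec]
  have h2 : ((k:ℝ)+2) ≠ 0 := by positivity
  field_simp
  ring

open Real in
lemma C_odd (j : ℕ) : (∫ x in (0:ℝ)..π, Real.cos x ^ (2*j+1)) = 0 := by
  induction j with
  | zero => simpa using integral_cos (a := 0) (b := π)
  | succ j ih =>
    have : 2*(j+1)+1 = (2*j+1)+2 := by ring
    rw [this, C_rec, ih, mul_zero]

open Real in
lemma tm_odd (j : ℕ) : (∫ x in (0:ℝ)..π, Real.cos x ^ (2*j+1) * Real.sin x ^ 2) = 0 := by
  rw [tm_val, C_odd]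
  simp

open Real in
lemma tm_even (j : ℕ) : (∫ x in (0:ℝ)..π, Real.cos x ^ (2*j) * Real.sin x ^ 2) =
    π/2 * (((2*j).choose j : ℝ)/((j+1) * 4^j)) := by
  induction j with
  | zero =>
    rw [tm_val]
    norm_num
  | succ j ih =>
    have hrec : (∫ x in (0:ℝ)..π, Real.cos x ^ (2*(j+1)) * Real.sin x ^ 2) =
        (2*(j:ℝ)+1)/(2*(j:ℝ)+4) * ∫ x in (0:ℝ)..π, Real.cos x ^ (2*j) * Real.sin x ^ 2 := by
      rw [tm_val, tm_val, show 2*(j+1) = 2*j+2 by ring, C_rec]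
      push_cast
      ring
    rw [hrec, ih]
    have hbin : ((j:ℝ)+1) * ((2*(j+1)).choose (j+1) : ℝ) = 2*(2*(j:ℝ)+1) * ((2*j).choose j : ℝ) := by
      have := Nat.succ_mul_centralBinom_succ j
      have hc : (2*(j+1)).choose (j+1) = Nat.centralBinom (j+1) := rfl
      have hc2 : (2*j).choose j = Nat.centralBinom j := rfl
      rw [hc, hc2]
      exact_mod_cast congrArg (fun n : ℕ => (n:ℝ)) this
    push_cast at hbin ⊢
    have h5 : ((j:ℝ)+1) ≠ 0 := by positivity
    have hc1 : ((2*(j+1)).choose (j+1) : ℝ) = 2*(2*(j:ℝ)+1)*((2*j).choose j : ℝ)/((j:ℝ)+1) := by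
      field_simp
      linarith [hbin]
    push_cast at hc1
    rw [hc1]
    have h6 : ((j:ℝ)+2) ≠ 0 := by positivity
    have h7 : (2*(j:ℝ)+4) ≠ 0 := by positivity
    have h8 : (4:ℝ)^j ≠ 0 := by positivity
    field_simp
    ring

open Real in
lemma int_cos_ne (c : ℝ) (hc : c ≠ 0) (hsin : Real.sin (c * π) = 0) :
    (∫ x in (0:ℝ)..π, Real.cos (c*x)) = 0 := by
  rw [intervalIntegral.integral_comp_mul_left Real.cos hc]
  simp [integral_cos, hsin]

open Real in
lemma sin_orth (A B : ℕ) (hA : 0 < A) (hB : 0 < B) :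
    (∫ x in (0:ℝ)..π, Real.sin (A*x) * Real.sin (B*x)) =
      if A = B then π/2 else 0 := by
  have hpt : (fun x : ℝ => Real.sin (A*x) * Real.sin (B*x)) =
      fun x : ℝ => (Real.cos (((A:ℝ)-B)*x) - Real.cos (((A:ℝ)+B)*x))/2 := by
    funext x
    rw [show ((A:ℝ)-B)*x = (A:ℝ)*x - (B:ℝ)*x by ring, show ((A:ℝ)+B)*x = (A:ℝ)*x + (B:ℝ)*x by ring,
      Real.cos_sub, Real.cos_add]
    ring
  rw [hpt]
  have hint1 : IntervalIntegrable (fun x : ℝ => Real.cos (((A:ℝ)-B)*x)) volume 0 π :=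
    (Real.continuous_cos.comp (continuous_const.mul continuous_id)).intervalIntegrable 0 π
  have hint2 : IntervalIntegrable (fun x : ℝ => Real.cos (((A:ℝ)+B)*x)) volume 0 π :=
    (Real.continuous_cos.comp (continuous_const.mul continuous_id)).intervalIntegrable 0 π
  have hsum : (∫ x in (0:ℝ)..π, Real.cos (((A:ℝ)+B)*x)) = 0 := by
    apply int_cos_ne _ (by positivity)
    have : ((A:ℝ)+B) = ((A+B : ℕ) : ℝ) := by push_cast; ring
    rw [this, Real.sin_nat_mul_pi]
  by_cases hAB : A = B
  · subst hAB
    simp only [sub_self, zero_mul, Real.cos_zero]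
    rw [if_true]
    have : (∫ x in (0:ℝ)..π, ((1:ℝ) - Real.cos (((A:ℝ)+A)*x))/2) =
        ((∫ x in (0:ℝ)..π, (1:ℝ)) - ∫ x in (0:ℝ)..π, Real.cos (((A:ℝ)+A)*x))/2 := by
      rw [← intervalIntegral.integral_sub (intervalIntegrable_const) (by
        simpa using hint2), intervalIntegral.integral_div]
    rw [this]
    have h2 : (∫ x in (0:ℝ)..π, Real.cos (((A:ℝ)+A)*x)) = 0 := by simpa using hsum
    rw [h2]
    simp
  · rw [if_neg hAB]
    have hdiff : (∫ x in (0:ℝ)..π, Real.cos (((A:ℝ)-B)*x)) = 0 := by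
      apply int_cos_ne
      · intro hcon
        apply hAB
        have : (A:ℝ) = B := by linarith
        exact_mod_cast this
      · have : ((A:ℝ)-B) = ((A:ℤ)-B : ℤ) := by push_cast; ring
        rw [this, Real.sin_int_mul_pi]
    have : (∫ x in (0:ℝ)..π, (Real.cos (((A:ℝ)-B)*x) - Real.cos (((A:ℝ)+B)*x))/2) =
        ((∫ x in (0:ℝ)..π, Real.cos (((A:ℝ)-B)*x)) - ∫ x in (0:ℝ)..π,
          Real.cos (((A:ℝ)+B)*x))/2 := by
      rw [← intervalIntegral.integral_sub hint1 hint2, intervalIntegral.integral_div]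
    rw [this, hdiff, hsum]
    simp

lemma transfer (P : Polynomial ℝ) :
    (∫ g, P.eval ((aE g).re) ∂μ) =
      (2/Real.pi) * ∫ x in (0:ℝ)..Real.pi, P.eval (Real.cos x) * Real.sin x ^ 2 := by
  induction P using Polynomial.induction_on' with
  | add p q hp hq =>
    have i1 : Integrable (fun g : SU2 => p.eval ((aE g).re)) μ :=
      su2_integrable μ (p.continuous.comp (Complex.continuous_re.comp cont_aE))
    have i2 : Integrable (fun g : SU2 => q.eval ((aE g).re)) μ :=
      su2_integrable μ (q.continuous.comp (Complex.continuous_re.comp cont_aE))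
    have j1 : IntervalIntegrable (fun x : ℝ => p.eval (Real.cos x) * Real.sin x ^ 2)
        volume 0 Real.pi :=
      ((p.continuous.comp Real.continuous_cos).mul
        (Real.continuous_sin.pow 2)).intervalIntegrable 0 Real.pi
    have j2 : IntervalIntegrable (fun x : ℝ => q.eval (Real.cos x) * Real.sin x ^ 2)
        volume 0 Real.pi :=
      ((q.continuous.comp Real.continuous_cos).mul
        (Real.continuous_sin.pow 2)).intervalIntegrable 0 Real.pi
    simp only [Polynomial.eval_add]
    rw [integral_add i1 i2]
    have : (∫ x in (0:ℝ)..Real.pi, (p.eval (Real.cos x) + q.eval (Real.cos x)) * Real.sin x ^ 2) =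
        (∫ x in (0:ℝ)..Real.pi, p.eval (Real.cos x) * Real.sin x ^ 2) +
          ∫ x in (0:ℝ)..Real.pi, q.eval (Real.cos x) * Real.sin x ^ 2 := by
      rw [← intervalIntegral.integral_add j1 j2]
      congr 1
      funext x
      ring
    rw [this, hp, hq]
    ring
  | monomial n a =>
    simp only [Polynomial.eval_monomial]
    have hL : (∫ g, a * (aE g).re ^ n ∂μ) = a * ∫ g, (aE g).re ^ n ∂μ := integral_const_mul a _
    have hR : (∫ x in (0:ℝ)..Real.pi, a * Real.cos x ^ n * Real.sin x ^ 2) =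
        a * ∫ x in (0:ℝ)..Real.pi, Real.cos x ^ n * Real.sin x ^ 2 := by
      rw [← intervalIntegral.integral_const_mul]
      congr 1
      funext x
      ring
    rw [hL, hR]
    rcases Nat.even_or_odd n with ⟨k, hk⟩ | ⟨k, hk⟩
    · subst hk
      rw [show k + k = 2*k by ring, M_even μ k, tm_even k]
      have hπ : Real.pi ≠ 0 := Real.pi_ne_zero
      field_simp
    · subst hk
      rw [M_odd μ (2*k+1) (by simp [Nat.even_add_one, Nat.even_mul]), tm_odd k]
      ring

lemma x0_eq (g : SU2) : ((g.1.trace).re) / 2 = (aE g).re := by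
  rw [Matrix.trace_fin_two, su2_d_eq g]
  rw [Complex.add_re, Complex.conj_re]
  show ((aE g).re + (aE g).re) / 2 = (aE g).re
  ring

theorem haar_integral_character_orthonormality' (m n : ℕ) :
    ∫ g : SU2,
        (Polynomial.Chebyshev.U ℝ (m : ℤ)).eval (((g : SU2).1.trace).re / 2) *
          (Polynomial.Chebyshev.U ℝ (n : ℤ)).eval (((g : SU2).1.trace).re / 2) ∂μ =
      if m = n then 1 else 0 := by
  have hpt : (fun g : SU2 =>
      (Polynomial.Chebyshev.U ℝ (m : ℤ)).eval (((g : SU2).1.trace).re / 2) *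
        (Polynomial.Chebyshev.U ℝ (n : ℤ)).eval (((g : SU2).1.trace).re / 2)) =
      fun g : SU2 =>
        (Polynomial.Chebyshev.U ℝ (m : ℤ) * Polynomial.Chebyshev.U ℝ (n : ℤ)).eval ((aE g).re) := by
    funext g
    rw [Polynomial.eval_mul, x0_eq g]
  rw [hpt, transfer μ]
  have htrig : (fun x : ℝ =>
      (Polynomial.Chebyshev.U ℝ (m : ℤ) * Polynomial.Chebyshev.U ℝ (n : ℤ)).eval (Real.cos x) *
        Real.sin x ^ 2) = fun x : ℝ =>
        Real.sin ((m+1 : ℕ)*x) * Real.sin ((n+1 : ℕ)*x) := by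
    funext x
    have h1 := Polynomial.Chebyshev.U_real_cos x (m : ℤ)
    have h2 := Polynomial.Chebyshev.U_real_cos x (n : ℤ)
    rw [Polynomial.eval_mul]
    calc (Polynomial.Chebyshev.U ℝ (m : ℤ)).eval (Real.cos x) *
          (Polynomial.Chebyshev.U ℝ (n : ℤ)).eval (Real.cos x) * Real.sin x ^ 2
        = ((Polynomial.Chebyshev.U ℝ (m : ℤ)).eval (Real.cos x) * Real.sin x) *
          ((Polynomial.Chebyshev.U ℝ (n : ℤ)).eval (Real.cos x) * Real.sin x) := by ring
      _ = Real.sin ((((m:ℤ):ℝ)+1) * x) * Real.sin ((((n:ℤ):ℝ)+1) * x) := by rw [h1, h2]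
      _ = Real.sin ((m+1 : ℕ)*x) * Real.sin ((n+1 : ℕ)*x) := by norm_cast
  rw [htrig, sin_orth (m+1) (n+1) (by omega) (by omega)]
  have hπ : Real.pi ≠ 0 := Real.pi_ne_zero
  by_cases hmn : m = n
  · rw [if_pos (by omega : m+1 = n+1), if_pos hmn]
    field_simp
  · rw [if_neg (by omega : ¬ (m+1 = n+1)), if_neg hmn]
    ring


/-- Orthonormality of the `SU(2)` characters `χ_{m/2}(g) = U_m (Re (trace g) / 2)`:
`∫ χ_{m/2} χ_{n/2} dμ = δ_{mn}`. -/
theorem haar_integral_character_orthonormality (μ : Measure SU2) [μ.IsHaarMeasure]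
    [IsProbabilityMeasure μ] (m n : ℕ) :
    ∫ g : SU2,
        (Polynomial.Chebyshev.U ℝ (m : ℤ)).eval (((g : SU2).1.trace).re / 2) *
          (Polynomial.Chebyshev.U ℝ (n : ℤ)).eval (((g : SU2).1.trace).re / 2) ∂μ =
      if m = n then 1 else 0 :=
  haar_integral_character_orthonormality' μ m n
end
end

section
/- The sequence n ↦ (catalan n) · √π · n^{3/2} / 4^n tends to 1 as n → ∞, where catalan n = C(2n,n)/(n+1). Consequently, log dim H^{(2n)}_{trivial} = log(C(2n,n) − C(2n,n+1)) behaves asymptotically as 2n·log 2 − (3/2)·log n + O(1). (This is the paper's count of the coarse-grained degrees of freedom for a region with trivial internal graph topology and 2n spin-1/2 boundary edges.) -/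
open Filter

lemma stirlingSeq_pos' (n : ℕ) (hn : 1 ≤ n) : 0 < Stirling.stirlingSeq n := by
  obtain ⟨m, rfl⟩ := Nat.exists_eq_add_of_le hn
  simpa [Nat.add_comm] using Stirling.stirlingSeq'_pos m

open scoped Real in
lemma centralBinom_eq_stirling (n : ℕ) (hn : 1 ≤ n) :
    (Nat.centralBinom n : ℝ) =
      Stirling.stirlingSeq (2 * n) / (Stirling.stirlingSeq n) ^ 2 * (4 ^ n / Real.sqrt n) := by
  have hn0 : (0:ℝ) < n := by exact_mod_cast hn
  have hfact : (Nat.factorial n : ℝ) =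
      Stirling.stirlingSeq n * (Real.sqrt (2 * n) * ((n:ℝ) / Real.exp 1) ^ n) := by
    rw [Stirling.stirlingSeq, div_mul_cancel₀]
    positivity
  have hfact2 : (Nat.factorial (2 * n) : ℝ) =
      Stirling.stirlingSeq (2 * n) *
        (Real.sqrt (2 * (2 * n : ℕ)) * (((2 * n : ℕ):ℝ) / Real.exp 1) ^ (2 * n)) := by
    rw [Stirling.stirlingSeq, div_mul_cancel₀]
    positivity
  have hcb : (Nat.centralBinom n : ℝ) =
      (Nat.factorial (2 * n) : ℝ) / ((Nat.factorial n : ℝ) ^ 2) := by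
    rw [Nat.centralBinom, Nat.choose_eq_factorial_div_factorial (by omega)]
    have h1 : 2 * n - n = n := by omega
    rw [h1, Nat.cast_div]
    · push_cast; ring
    · have := Nat.factorial_mul_factorial_dvd_factorial_add n n
      simpa [two_mul, sq] using this
    · positivity
  rw [hcb, hfact, hfact2]
  have hsn : Real.sqrt (2 * (2 * n : ℕ)) = 2 * Real.sqrt n := by
    push_cast
    rw [show (2:ℝ) * (2 * n) = 2^2 * n by ring,
      Real.sqrt_mul (by positivity), Real.sqrt_sq (by norm_num)]
  have hpow : (((2 * n : ℕ):ℝ) / Real.exp 1) ^ (2 * n)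
      = 4 ^ n * (((n:ℝ) / Real.exp 1) ^ n) ^ 2 := by
    push_cast
    rw [show (2:ℝ) * n / Real.exp 1 = 2 * ((n:ℝ)/Real.exp 1) by ring, mul_pow,
      pow_mul, pow_mul]
    norm_num
    ring
  rw [hsn, hpow]
  have hs2n : (0:ℝ) < Real.sqrt (2 * (n:ℝ)) := Real.sqrt_pos.2 (by positivity)
  have hs1 : 0 < Stirling.stirlingSeq n := stirlingSeq_pos' n hn
  have hp : (0:ℝ) < ((n:ℝ) / Real.exp 1) ^ n := by positivity
  have hsqn2 : Real.sqrt (2 * (n:ℝ)) ^ 2 = 2 * n :=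
    Real.sq_sqrt (by positivity)
  set t := Real.sqrt (n:ℝ) with htdef
  have ht0 : 0 < t := Real.sqrt_pos.2 hn0
  have ht : t ^ 2 = (n:ℝ) := Real.sq_sqrt hn0.le
  rw [mul_pow, mul_pow, hsqn2]
  simp only [← ht]
  field_simp

/-- Asymptotics of the Catalan numbers, `catalan n = C(2n,n)/(n+1)`:
`(catalan n) · √π · n^{3/2} / 4^n → 1` as `n → ∞`, so that
`log dim H^{(2n)}_trivial = log (C(2n,n) − C(2n,n+1)) ∼ 2n log 2 − (3/2) log n + O(1)`. -/
theorem catalan_asymptotics :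
    Tendsto
      (fun n : ℕ => (catalan n : ℝ) * Real.sqrt Real.pi * (n : ℝ) ^ (3 / 2 : ℝ) / 4 ^ n)
      atTop (nhds 1) := by
  have hπ : (0:ℝ) < Real.sqrt Real.pi := Real.sqrt_pos.2 Real.pi_pos
  have h2n : Tendsto (fun n : ℕ => 2 * n) atTop atTop :=
    tendsto_atTop_mono (fun n => Nat.le_mul_of_pos_left n (by norm_num)) tendsto_id
  have hs2 : Tendsto (fun n : ℕ => Stirling.stirlingSeq (2 * n)) atTop (nhds (Real.sqrt Real.pi)) :=
    Stirling.tendsto_stirlingSeq_sqrt_pi.comp h2n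
  have hs : Tendsto (fun n : ℕ => Stirling.stirlingSeq n) atTop (nhds (Real.sqrt Real.pi)) :=
    Stirling.tendsto_stirlingSeq_sqrt_pi
  have hratio : Tendsto (fun n : ℕ =>
      Stirling.stirlingSeq (2 * n) / (Stirling.stirlingSeq n) ^ 2 * Real.sqrt Real.pi *
        ((n:ℝ) / ((n:ℝ) + 1))) atTop (nhds 1) := by
    have h1 := ((hs2.div (hs.pow 2) (by positivity)).mul_const (Real.sqrt Real.pi)).mul
      (tendsto_natCast_div_add_atTop (1:ℝ))
    have h2 : Real.sqrt Real.pi / Real.sqrt Real.pi ^ 2 * Real.sqrt Real.pi * 1 = 1 := by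
      field_simp
    rwa [h2] at h1
  refine hratio.congr' ?_
  filter_upwards [eventually_ge_atTop 1] with n hn
  have hn0 : (0:ℝ) < n := by exact_mod_cast hn
  have hcat : ((n:ℝ) + 1) * (catalan n : ℝ) = (Nat.centralBinom n : ℝ) := by
    exact_mod_cast congrArg (Nat.cast : ℕ → ℝ) (succ_mul_catalan_eq_centralBinom n)
  have hcat' : (catalan n : ℝ) = (Nat.centralBinom n : ℝ) / ((n:ℝ) + 1) := by
    field_simp [← hcat]
    linear_combination hcat
  rw [hcat', centralBinom_eq_stirling n hn]
  have hrpow : (n:ℝ) ^ (3 / 2 : ℝ) = (n:ℝ) * Real.sqrt n := by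
    rw [show (3/2 : ℝ) = 1 + 1/2 by norm_num, Real.rpow_add hn0, Real.rpow_one,
      ← Real.sqrt_eq_rpow]
  rw [hrpow]
  have hs1 : 0 < Stirling.stirlingSeq n := stirlingSeq_pos' n hn
  have hs2' : 0 < Stirling.stirlingSeq (2 * n) := stirlingSeq_pos' (2*n) (by omega)
  set t := Real.sqrt (n:ℝ) with htdef
  have ht0 : 0 < t := Real.sqrt_pos.2 hn0
  have ht : t ^ 2 = (n:ℝ) := Real.sq_sqrt hn0.le
  simp only [← ht]
  have h4 : (0:ℝ) < 4 ^ n := by positivity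
  field_simp
end

section
/- The sequence n ↦ C(2n, n) · √(π·n) / 4^n tends to 1 as n → ∞. Consequently, log dim H^{(2n)}_{1-loop} = log C(2n,n) behaves asymptotically as 2n·log 2 − (1/2)·log n + O(1), so that for large n the one-loop Hilbert space carries strictly more degrees of freedom than the trivial-topology one: log dim H^{(2n)}_{trivial} ∼ 2n·log 2 − (3/2)·log n < 2n·log 2 − (1/2)·log n ∼ log dim H^{(2n)}_{1-loop}. -/
open Filter

private lemma stirling_ratio_eq (n : ℕ) (hn : 1 ≤ n) :
    Stirling.stirlingSeq (2 * n) * Real.sqrt Real.pi / (Stirling.stirlingSeq n) ^ 2 =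
      (Nat.choose (2 * n) n : ℝ) * Real.sqrt (Real.pi * n) / 4 ^ n := by
  have hn' : (0 : ℝ) < n := by exact_mod_cast hn
  have hfac : ((2 * n).factorial : ℝ) =
      (Nat.choose (2 * n) n : ℝ) * n.factorial * n.factorial := by
    have h := Nat.choose_mul_factorial_mul_factorial (show n ≤ 2 * n by omega)
    rw [show 2 * n - n = n by omega] at h
    exact_mod_cast h.symm
  have hsq4 : Real.sqrt (2 * ((2 * n : ℕ) : ℝ)) = 2 * Real.sqrt n := by
    push_cast
    rw [show (2 : ℝ) * (2 * n) = 2 ^ 2 * n by ring, Real.sqrt_mul (by positivity),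
      Real.sqrt_sq (by norm_num)]
  have hsq2 : Real.sqrt (2 * (n : ℝ)) ^ 2 = 2 * n :=
    Real.sq_sqrt (by positivity)
  have hsqpin : Real.sqrt (Real.pi * n) = Real.sqrt Real.pi * Real.sqrt n :=
    Real.sqrt_mul Real.pi_pos.le _
  have hpow : (((2 * n : ℕ) : ℝ) / Real.exp 1) ^ (2 * n) =
      4 ^ n * ((n / Real.exp 1) ^ n) ^ 2 := by
    push_cast
    have h4 : ((2 : ℝ) * n / Real.exp 1) ^ 2 = 4 * ((n : ℝ) / Real.exp 1) ^ 2 := by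
      field_simp; ring
    rw [pow_mul, h4, mul_pow, pow_right_comm]
  rw [Stirling.stirlingSeq, Stirling.stirlingSeq, hfac, hsq4, hpow, hsqpin]
  have hfne : (n.factorial : ℝ) ≠ 0 := by positivity
  have hsqn : (0 : ℝ) < Real.sqrt n := Real.sqrt_pos.mpr hn'
  have hpne : ((n : ℝ) / Real.exp 1) ^ n ≠ 0 := by positivity
  have hq : (4 : ℝ) ^ n ≠ 0 := by positivity
  have hns : (n : ℝ) = Real.sqrt n ^ 2 := (Real.sq_sqrt hn'.le).symm
  set s := Real.sqrt (n : ℝ) with hs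
  set P := ((n : ℝ) / Real.exp 1) ^ n with hP
  set F := (n.factorial : ℝ) with hF
  rw [show (2 : ℝ) * (n : ℝ) = 2 * s ^ 2 by rw [← hns]]
  field_simp
  ring_nf
  rw [Real.sq_sqrt (by positivity : (0:ℝ) ≤ s ^ 2 * 2)]
  ring

/-- Asymptotics of the central binomial coefficient: `C(2n,n) · √(πn) / 4^n → 1` as `n → ∞`
(so `log dim H^{(2n)}_{1-loop} = log C(2n,n) ∼ 2n log 2 − (1/2) log n + O(1)`); moreover for
every `n ≥ 1` the one-loop Hilbert space is strictly larger than the trivial-topology one: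
`dim H^{(2n)}_trivial = C(2n,n) − C(2n,n+1) < C(2n,n) = dim H^{(2n)}_{1-loop}`. -/
theorem central_binom_asymptotics_and_one_loop_larger :
    Tendsto
      (fun n : ℕ => (Nat.choose (2 * n) n : ℝ) * Real.sqrt (Real.pi * n) / 4 ^ n)
      atTop (nhds 1) ∧
    ∀ n : ℕ, 1 ≤ n →
      Nat.choose (2 * n) n - Nat.choose (2 * n) (n + 1) < Nat.choose (2 * n) n := by
  constructor
  · have h2 := Stirling.tendsto_stirlingSeq_sqrt_pi
    have h1 : Tendsto (fun n : ℕ => Stirling.stirlingSeq (2 * n)) atTop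
        (nhds (Real.sqrt Real.pi)) :=
      h2.comp (tendsto_atTop_atTop_of_monotone (fun a b h => by omega)
        (fun b => ⟨b, by omega⟩))
    have hmul : Tendsto (fun n : ℕ => Stirling.stirlingSeq (2 * n) * Real.sqrt Real.pi)
        atTop (nhds (Real.sqrt Real.pi * Real.sqrt Real.pi)) := h1.mul_const _
    have hden : Tendsto (fun n : ℕ => (Stirling.stirlingSeq n) ^ 2) atTop
        (nhds ((Real.sqrt Real.pi) ^ 2)) := h2.pow 2
    have hlim := hmul.div hden (by positivity)
    have hval : Real.sqrt Real.pi * Real.sqrt Real.pi / (Real.sqrt Real.pi) ^ 2 = 1 := by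
      rw [Real.sq_sqrt Real.pi_pos.le, Real.mul_self_sqrt Real.pi_pos.le,
        div_self Real.pi_ne_zero]
    rw [hval] at hlim
    refine hlim.congr' ?_
    filter_upwards [eventually_ge_atTop 1] with n hn
    exact stirling_ratio_eq n hn
  · intro n hn
    exact Nat.sub_lt (Nat.choose_pos (by omega)) (Nat.choose_pos (by omega))
end
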